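/- Every Hausdorff topological group that is uniformly NSS is metrizable, i.e., its topology is induced by some metric. -/

import Mathlib

open Filter Set Topology Pointwise Uniformity

/-- The neighborhood `U` of the identity is uniformly free from small subgroups: for every
neighborhood `V` of the identity there is `n` such that every `x ∉ V` has `x ^ k ∉ U` for some
`1 ≤ k ≤ n`. -/
def UniformlyFreeFSS {G : Type*} [Group G] [TopologicalSpace G] (U : Set G) : Prop :=
  ∀ V ∈ 𝓝 (1 : G), ∃ n : ℕ, ∀ x : G, x ∉ V → ∃ k : ℕ, 1 ≤ k ∧ k ≤ n ∧ x ^ k ∉ U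

/-- A topological group is uniformly NSS if some neighborhood of the identity is uniformly free
from small subgroups. -/
def UNSS (G : Type*) [Group G] [TopologicalSpace G] : Prop :=
  ∃ U ∈ 𝓝 (1 : G), UniformlyFreeFSS U

/-- A topological group has no small subgroups if some neighborhood of the identity contains no
subgroup other than the trivial one. -/
def NSS (G : Type*) [Group G] [TopologicalSpace G] : Prop :=
  ∃ U ∈ 𝓝 (1 : G), ∀ H : Subgroup G, (H : Set G) ⊆ U → H = ⊥

theorem stmt_9 {G : Type*} [Group G] [TopologicalSpace G] [IsTopologicalGroup G] [T2Space G]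
    (h : UNSS G) : TopologicalSpace.MetrizableSpace G := by
  obtain ⟨U, hU, hUFSS⟩ := h
  set W : ℕ → Set G := fun n => {x | ∀ k, 1 ≤ k → k ≤ n → x ^ k ∈ U} with hW
  have hWmem : ∀ n, W n ∈ 𝓝 (1 : G) := by
    intro n
    have heq : W n = ⋂ k ∈ Finset.Icc 1 n, (fun x : G => x ^ k) ⁻¹' U := by
      ext x
      simp [hW, Finset.mem_Icc]
    rw [heq]
    refine (Filter.biInter_finset_mem _).2 fun k _ => ?_
    have : ContinuousAt (fun x : G => x ^ k) 1 := (continuous_pow k).continuousAt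
    have := this.preimage_mem_nhds (by simpa using hU)
    simpa using this
  have hbasis : (𝓝 (1 : G)).HasBasis (fun _ : ℕ => True) W := by
    constructor
    intro s
    constructor
    · intro hs
      obtain ⟨n, hn⟩ := hUFSS s hs
      refine ⟨n, trivial, fun x hx => ?_⟩
      by_contra hxs
      obtain ⟨k, hk1, hkn, hkU⟩ := hn x hxs
      exact hkU (hx k hk1 hkn)
    · rintro ⟨n, -, hsub⟩
      exact mem_of_superset (hWmem n) hsub
  haveI : (𝓝 (1 : G)).IsCountablyGenerated := hbasis.isCountablyGenerated
  letI u : UniformSpace G := IsTopologicalGroup.rightUniformSpace G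
  haveI : (𝓤 G).IsCountablyGenerated := by
    rw [uniformity_eq_comap_nhds_one']
    exact Filter.comap.isCountablyGenerated _ _
  exact UniformSpace.metrizableSpace
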